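/- For all z > 0, W(z) ≥ (1/2)·(1 + log z), where W is the principal branch of the Lambert W function satisfying W(z)·e^{W(z)} = z. -/
import Mathlib


theorem lambertW_lower_bound (W : ℝ → ℝ)
    (hW : ∀ z : ℝ, 0 ≤ z → 0 ≤ W z ∧ W z * Real.exp (W z) = z) :
    ∀ z : ℝ, 0 < z → W z ≥ (1 / 2) * (1 + Real.log z) := by
  intro z hz
  obtain ⟨hW0, hWe⟩ := hW z hz.le
  have hWpos : 0 < W z := by
    rcases hW0.lt_or_eq with h | h
    · exact h
    · exfalso; rw [← h] at hWe; simp at hWe; linarith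
  have hlog : Real.log z = Real.log (W z) + W z := by
    conv_lhs => rw [← hWe, Real.log_mul hWpos.ne' (Real.exp_pos _).ne', Real.log_exp]
  have h1 : Real.log (W z) ≤ W z - 1 := Real.log_le_sub_one_of_pos hWpos
  rw [hlog]; linarith
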